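/- Let (T, M) be a valuation domain with residue field k and residue map π : T → k, and let D be an integral domain with fraction field k, viewed as a subring of k. If D is globally perinormal, then the pullback A := D ×_k T = π⁻¹(D) is globally perinormal. -/

import Mathlib

open TensorProduct

def GoesDown {R S : Type*} [CommRing R] [CommRing S] (f : R →+* S) : Prop :=
  ∀ ⦃p' p : Ideal R⦄, p'.IsPrime → p.IsPrime → p' ≤ p →
    ∀ ⦃q : Ideal S⦄, q.IsPrime → q.comap f = p →
      ∃ q' : Ideal S, q'.IsPrime ∧ q' ≤ q ∧ q'.comap f = p'

def IsPerinormalSubring {F : Type*} [Field F] (R : Subring F) : Prop :=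
  ∀ S : Subring F, ∀ h : R ≤ S, GoesDown (Subring.inclusion h) →
    @Module.Flat R S _ _ (RingHom.toAlgebra (Subring.inclusion h)).toModule

def IsGloballyPerinormalSubring {F : Type*} [Field F] (R : Subring F) : Prop :=
  IsPerinormalSubring R ∧
    ∀ S : Subring F, ∀ h : R ≤ S,
      @Module.Flat R S _ _ (RingHom.toAlgebra (Subring.inclusion h)).toModule →
        ∃ W : Submonoid R, @IsLocalization R _ W S _ (RingHom.toAlgebra (Subring.inclusion h))

lemma goesDown_descend {A S D E : Type*} [CommRing A] [CommRing S] [CommRing D] [CommRing E]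
    (f : A →+* S) (g : D →+* E) (ρ : A →+* D) (τ : S →+* E)
    (hρ : Function.Surjective ρ) (hτ : Function.Surjective τ)
    (hcomm : g.comp ρ = τ.comp f)
    (hlift : ∀ s d, τ s = g d → ∃ a, f a = s ∧ ρ a = d)
    (hf : GoesDown f) : GoesDown g := by
  intro p' p hp' hp hle q hq hqc
  haveI := hp'.comap ρ
  haveI := hp.comap ρ
  haveI := hq.comap τ
  have hQc : (q.comap τ).comap f = p.comap ρ := by
    rw [Ideal.comap_comap, ← hcomm, ← Ideal.comap_comap, hqc]
  obtain ⟨Q₁, hQ₁p, hQ₁le, hQ₁c⟩ :=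
    hf (Ideal.comap_isPrime ρ p') (Ideal.comap_isPrime ρ p)
      (Ideal.comap_mono hle) (Ideal.comap_isPrime τ q) hQc
  have hker : RingHom.ker τ ≤ Q₁ := by
    intro s hs
    obtain ⟨a, hfa, hρa⟩ := hlift s 0 (by rw [RingHom.mem_ker] at hs; rw [hs, map_zero])
    have : a ∈ Q₁.comap f := by
      rw [hQ₁c, Ideal.mem_comap, hρa]; exact p'.zero_mem
    rw [Ideal.mem_comap, hfa] at this; exact this
  refine ⟨Q₁.map τ, Ideal.map_isPrime_of_surjective hτ hker, ?_, ?_⟩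
  · exact Ideal.map_le_iff_le_comap.mpr hQ₁le
  · apply le_antisymm
    · intro d hd
      rw [Ideal.mem_comap, Ideal.mem_map_iff_of_surjective τ hτ] at hd
      obtain ⟨s, hs, hsd⟩ := hd
      obtain ⟨a, hfa, hρa⟩ := hlift s d hsd
      have : a ∈ Q₁.comap f := by rw [Ideal.mem_comap, hfa]; exact hs
      rw [hQ₁c, Ideal.mem_comap, hρa] at this; exact this
    · intro d hd
      obtain ⟨a, hρa⟩ := hρ d
      have ha : a ∈ Q₁.comap f := by rw [hQ₁c, Ideal.mem_comap, hρa]; exact hd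
      rw [Ideal.mem_comap] at ha ⊢
      have : τ (f a) = g d := by
        rw [← hρa, ← RingHom.comp_apply, ← hcomm, RingHom.comp_apply]
      rw [← this]
      exact Ideal.mem_map_of_mem τ ha

lemma flat_descend {A S D E : Type*} [CommRing A] [CommRing S] [CommRing D] [CommRing E]
    (f : A →+* S) (g : D →+* E) (ρ : A →+* D) (τ : S →+* E)
    (hρ : Function.Surjective ρ) (hτ : Function.Surjective τ)
    (hcomm : g.comp ρ = τ.comp f)
    (hker : ∀ s, τ s = 0 → ∃ a, f a = s ∧ ρ a = 0)
    (hflat : @Module.Flat A S _ _ f.toAlgebra.toModule) :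
    @Module.Flat D E _ _ g.toAlgebra.toModule := by
  letI : Algebra A S := f.toAlgebra
  letI : Algebra A D := ρ.toAlgebra
  letI : Algebra D E := g.toAlgebra
  letI : Algebra A E := (g.comp ρ).toAlgebra
  haveI : IsScalarTower A D E := IsScalarTower.of_algebraMap_eq fun a => rfl
  haveI : Module.Flat A S := hflat
  -- τ as an A-linear map
  let τₗ : S →ₗ[A] E :=
    { toFun := τ
      map_add' := by simp
      map_smul' := fun a s => by
        simp only [Algebra.smul_def, map_mul, RingHom.id_apply]
        congr 1
        show τ (f a) = (g.comp ρ) a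
        rw [hcomm]; rfl }
  let φ : D ⊗[A] S →ₗ[D] E := τₗ.liftBaseChange D
  have hone : ∀ x : D ⊗[A] S, ∃ s : S, x = 1 ⊗ₜ[A] s := by
    intro x
    induction x with
    | zero => exact ⟨0, (TensorProduct.tmul_zero _ _).symm⟩
    | tmul d s =>
        obtain ⟨a, hρa⟩ := hρ d
        refine ⟨a • s, ?_⟩
        have h1 : (a • (1:D)) = d := by
          rw [Algebra.smul_def, mul_one]; exact hρa
        rw [← h1, TensorProduct.smul_tmul]
    | add x y hx hy =>
        obtain ⟨s, hs⟩ := hx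
        obtain ⟨t, ht⟩ := hy
        exact ⟨s + t, by rw [hs, ht, TensorProduct.tmul_add]⟩
  have hbij : Function.Bijective φ := by
    constructor
    · intro x y hxy
      obtain ⟨s, rfl⟩ := hone x
      obtain ⟨t, rfl⟩ := hone y
      have : τ s = τ t := by
        simpa [φ, LinearMap.liftBaseChange_tmul, τₗ] using hxy
      have h0 : τ (s - t) = 0 := by rw [map_sub, this, sub_self]
      obtain ⟨a, hfa, hρa⟩ := hker _ h0
      have h2 : f a = a • (1 : S) := by rw [Algebra.smul_def, mul_one]; rfl
      have h1 : (a • (1:D)) = (0:D) := by rw [Algebra.smul_def, mul_one]; exact hρa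
      have : (1 : D) ⊗ₜ[A] s - 1 ⊗ₜ[A] t = 0 := by
        rw [← TensorProduct.tmul_sub, ← hfa, h2, ← TensorProduct.smul_tmul, h1,
          TensorProduct.zero_tmul]
      rw [← sub_eq_zero]; exact this
    · intro e
      obtain ⟨s, hs⟩ := hτ e
      exact ⟨1 ⊗ₜ[A] s, by simpa [φ, LinearMap.liftBaseChange_tmul, τₗ] using hs⟩
  exact Module.Flat.of_linearEquiv (LinearEquiv.ofBijective φ hbij).symm

set_option maxHeartbeats 2000000 in
theorem stmt_15 {K k : Type*} [Field K] [Field k] (T : Subring K)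
    [ValuationRing T] [IsFractionRing T K]
    (π : T →+* k) (hπ : Function.Surjective π)
    (hker : RingHom.ker π = IsLocalRing.maximalIdeal T)
    (D : Subring k) [IsFractionRing D k]
    (hD : IsGloballyPerinormalSubring D) :
    IsGloballyPerinormalSubring ((D.comap π).map T.subtype) := by
  classical
  set A : Subring K := (D.comap π).map T.subtype with hAdef
  -- membership in A
  have hmem : ∀ {x : K} (hx : x ∈ T), π ⟨x, hx⟩ ∈ D → x ∈ A := by
    intro x hx hd
    exact ⟨⟨x, hx⟩, hd, rfl⟩
  have hmem' : ∀ {x : K}, x ∈ A → ∃ hx : x ∈ T, π ⟨x, hx⟩ ∈ D := by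
    rintro x ⟨t, ht, rfl⟩
    exact ⟨t.2, ht⟩
  have hAT : ∀ {x : K}, x ∈ A → x ∈ T := fun hx => (hmem' hx).1
  have halg : ∀ t : T, algebraMap T K t = (t : K) := fun t => rfl
  -- π t = 0 iff t is not a unit
  have hπ0 : ∀ t : T, (π t = 0 ↔ ¬IsUnit t) := by
    intro t
    rw [← RingHom.mem_ker, hker]
    exact IsLocalRing.mem_maximalIdeal t
  have hMA : ∀ t : T, π t = 0 → (t : K) ∈ A := by
    intro t h0
    exact hmem t.2 (by rw [show (⟨(t : K), t.2⟩ : T) = t from rfl, h0]; exact D.zero_mem)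
  -- inverses of units
  have hinvT : ∀ t : T, π t ≠ 0 → ∃ s : T, (t : K) * s = 1 ∧ π t * π s = 1 := by
    intro t h0
    obtain ⟨u, hu⟩ := not_not.mp (fun h => h0 ((hπ0 t).mpr h))
    refine ⟨(u⁻¹ : Tˣ), ?_, ?_⟩
    · rw [← hu]
      exact_mod_cast congrArg (Subtype.val) u.mul_inv
    · rw [← hu, ← map_mul, u.mul_inv, map_one]
  -- elements outside T
  have hdich : ∀ x : K, x ∉ T → x ≠ 0 ∧ ∃ hx : x⁻¹ ∈ T, π ⟨x⁻¹, hx⟩ = 0 := by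
    intro x hxT
    have hx0 : x ≠ 0 := fun h => hxT (h ▸ T.zero_mem)
    rcases ValuationRing.isInteger_or_isInteger T x with ⟨t, ht⟩ | ⟨t, ht⟩
    · exact absurd (show x ∈ T by rw [← ht]; exact t.2) hxT
    · have hxi : x⁻¹ ∈ T := by rw [← ht]; exact t.2
      refine ⟨hx0, hxi, ?_⟩
      by_contra h0
      obtain ⟨s, hs, -⟩ := hinvT ⟨x⁻¹, hxi⟩ h0
      have hs' : x⁻¹ * (s : K) = 1 := hs
      rw [inv_mul_eq_one₀ hx0] at hs'
      exact hxT (hs' ▸ s.2)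
  -- dichotomy for overrings
  have hcase : ∀ (S : Subring K), A ≤ S → (∀ x ∈ S, x ∈ T) ∨ (∀ x ∈ T, x ∈ S) := by
    intro S hAS
    by_cases hST : ∀ x ∈ S, x ∈ T
    · exact Or.inl hST
    · right
      push_neg at hST
      obtain ⟨x, hxS, hxT⟩ := hST
      obtain ⟨hx0, hxi, h0⟩ := hdich x hxT
      intro y hyT
      have hyx : y * x⁻¹ ∈ A := by
        have h0' : π ((⟨y, hyT⟩ : T) * ⟨x⁻¹, hxi⟩) = 0 := by rw [map_mul, h0, mul_zero]
        exact hMA _ h0'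
      have hy : y = (y * x⁻¹) * x := by field_simp
      exact hy ▸ S.mul_mem (hAS hyx) hxS
  -- the key lemma: every going-down or flat overring of A is a localization of A
  have key : ∀ (S : Subring K) (h : A ≤ S),
      (GoesDown (Subring.inclusion h) ∨
        @Module.Flat A S _ _ (RingHom.toAlgebra (Subring.inclusion h)).toModule) →
      ∃ W : Submonoid A, @IsLocalization A _ W S _ (RingHom.toAlgebra (Subring.inclusion h)) := by
    intro S h hyp
    letI : Algebra A S := (Subring.inclusion h).toAlgebra
    rcases hcase S h with hST | hTS
    · -- case S ≤ T : S is a pullback of an overring of D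
      have hST' : S ≤ T := fun x hx => hST x hx
      set f : ↥A →+* ↥S := Subring.inclusion h with hf
      set σ : ↥S →+* k := π.comp (Subring.inclusion hST') with hσ
      set E : Subring k := σ.range with hE
      have hDE : D ≤ E := by
        intro d hd
        obtain ⟨t, ht⟩ := hπ d
        have htA : (t : K) ∈ A := hmem t.2
          (by rw [show (⟨(t : K), t.2⟩ : T) = t from rfl, ht]; exact hd)
        exact ⟨⟨(t : K), h htA⟩,
          by show π ⟨(t : K), hST' (h htA)⟩ = d;
             rw [show (⟨(t : K), hST' (h htA)⟩ : T) = t from rfl, ht]⟩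
      set g : ↥D →+* ↥E := Subring.inclusion hDE with hg
      set τ : ↥S →+* ↥E := σ.rangeRestrict with hτ
      have hρmem : ∀ a : ↥A, (π.comp (Subring.inclusion (fun x hx => hAT hx : A ≤ T))) a ∈ D :=
        fun a => (hmem' a.2).2
      set ρ : ↥A →+* ↥D :=
        (π.comp (Subring.inclusion (fun x hx => hAT hx : A ≤ T))).codRestrict _ hρmem with hρ
      have hρs : Function.Surjective ρ := by
        intro d
        obtain ⟨t, ht⟩ := hπ (d : k)
        have htA : (t : K) ∈ A := hmem t.2
          (by rw [show (⟨(t : K), t.2⟩ : T) = t from rfl, ht]; exact d.2)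
        exact ⟨⟨(t : K), htA⟩, Subtype.ext
          (by show π ⟨(t : K), _⟩ = (d : k);
              rw [show (⟨(t : K), hAT htA⟩ : T) = t from rfl, ht])⟩
      have hτs : Function.Surjective τ := σ.rangeRestrict_surjective
      have hcomm : g.comp ρ = τ.comp f := by
        ext a
        rfl
      have hlift : ∀ s d, τ s = g d → ∃ a, f a = s ∧ ρ a = d := by
        intro s d hsd
        have hval : π ⟨(s : K), hST' s.2⟩ = (d : k) := congrArg Subtype.val hsd
        have hsA : (s : K) ∈ A := hmem (hST' s.2) (hval ▸ d.2)
        exact ⟨⟨(s : K), hsA⟩, Subtype.ext rfl, Subtype.ext hval⟩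
      have hflatE : @Module.Flat D E _ _ (RingHom.toAlgebra g).toModule := by
        rcases hyp with hGD | hFlat
        · exact hD.1 E hDE (goesDown_descend f g ρ τ hρs hτs hcomm hlift hGD)
        · exact flat_descend f g ρ τ hρs hτs hcomm
            (fun s hs => hlift s 0 (by rw [hs, map_zero])) hFlat
      obtain ⟨W, hW⟩ := hD.2 E hDE hflatE
      letI : Algebra ↥D ↥E := g.toAlgebra
      haveI : IsLocalization W ↥E := hW
      have hSfull : ∀ x (hx : x ∈ T), π ⟨x, hx⟩ ∈ E → x ∈ S := by
        intro x hx hxE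
        obtain ⟨s0, hs0⟩ := hxE
        have hdiff : π (⟨x, hx⟩ - ⟨(s0 : K), hST' s0.2⟩) = 0 := by
          rw [map_sub, show π ⟨(s0 : K), hST' s0.2⟩ = σ s0 from rfl, hs0, sub_self]
        have hxs : x - (s0 : K) ∈ A := hMA _ hdiff
        have := S.add_mem (h hxs) s0.2
        simpa using this
      refine ⟨W.comap (ρ : ↥A →* ↥D), ?_⟩
      refine { map_units := ?_, surj := ?_, exists_of_eq := ?_ }
      · rintro ⟨y, hy⟩
        have hy' : ρ y ∈ W := hy
        have hu : IsUnit (algebraMap ↥D ↥E (ρ y)) := IsLocalization.map_units ↥E ⟨ρ y, hy'⟩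
        have hπy : π ⟨(y : K), hAT y.2⟩ ≠ 0 := by
          intro h0
          exact hu.ne_zero (Subtype.ext h0)
        obtain ⟨u, hu'⟩ := hu
        obtain ⟨s, hs1, hs2⟩ := hinvT ⟨(y : K), hAT y.2⟩ hπy
        have h1 : ((u : ↥E) : k) * (((u⁻¹ : Eˣ) : ↥E) : k) = 1 :=
          congrArg Subtype.val u.mul_inv
        rw [hu'] at h1
        have h1' : π ⟨(y : K), hAT y.2⟩ * (((u⁻¹ : Eˣ) : ↥E) : k) = 1 := h1
        have hsinv : π s = (((u⁻¹ : Eˣ) : ↥E) : k) :=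
          (inv_eq_of_mul_eq_one_right hs2).symm.trans (inv_eq_of_mul_eq_one_right h1')
        have hsS : (s : K) ∈ S := hSfull _ s.2
          (by rw [show (⟨(s : K), s.2⟩ : T) = s from rfl, hsinv]
              exact ((u⁻¹ : Eˣ) : ↥E).2)
        exact IsUnit.of_mul_eq_one ⟨(s : K), hsS⟩ (Subtype.ext hs1)
      · intro z
        obtain ⟨⟨d, w⟩, hw⟩ := IsLocalization.surj (M := W) (τ z)
        obtain ⟨a1, ha1⟩ := hρs (w : ↥D)
        have ha1W : a1 ∈ W.comap (ρ : ↥A →* ↥D) := by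
          show ρ a1 ∈ W
          rw [ha1]; exact w.2
        have hval : π ⟨(z : K), hST' z.2⟩ * (((w : ↥D)) : k) = (((d : ↥D)) : k) :=
          congrArg Subtype.val hw
        have hzaT : (z : K) * (a1 : K) ∈ T := T.mul_mem (hST' z.2) (hAT a1.2)
        have hzaD : π ⟨(z : K) * (a1 : K), hzaT⟩ ∈ D := by
          rw [show (⟨(z : K) * (a1 : K), hzaT⟩ : T)
              = ⟨(z : K), hST' z.2⟩ * ⟨(a1 : K), hAT a1.2⟩ from rfl, map_mul]
          have ha1v : π ⟨(a1 : K), hAT a1.2⟩ = ((w : ↥D) : k) := by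
            rw [← ha1]; rfl
          rw [ha1v, hval]
          exact (d : ↥D).2
        exact ⟨⟨⟨_, hmem hzaT hzaD⟩, ⟨a1, ha1W⟩⟩, Subtype.ext rfl⟩
      · intro x y hxy
        have hv := congrArg Subtype.val hxy
        have hxy' : x = y := Subtype.ext hv
        exact ⟨1, by rw [hxy']⟩
    · -- case T ≤ S : S is an overring of the valuation ring T
      clear hyp
      refine ⟨{ carrier := {a : A | (a : K) ≠ 0 ∧ ((a : K))⁻¹ ∈ S},
                one_mem' := ⟨one_ne_zero, by simpa using S.one_mem⟩,
                mul_mem' := ?_ }, ?_⟩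
      · rintro a b ⟨ha0, hai⟩ ⟨hb0, hbi⟩
        refine ⟨by push_cast; exact mul_ne_zero ha0 hb0, ?_⟩
        show ((↑(a * b) : K))⁻¹ ∈ S
        push_cast
        rw [mul_inv]
        exact S.mul_mem hai hbi
      · refine { map_units := ?_, surj := ?_, exists_of_eq := ?_ }
        · rintro ⟨y, hy0, hyi⟩
          exact IsUnit.of_mul_eq_one ⟨_, hyi⟩
            (Subtype.ext (mul_inv_cancel₀ hy0))
        · intro z
          by_cases hz : (z : K) ∈ T
          · obtain ⟨x, y, hy, hxy⟩ := IsFractionRing.div_surjective (A := D) (π ⟨z, hz⟩)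
            have hy0 : (y : k) ≠ 0 := by
              simpa using nonZeroDivisors.ne_zero hy
            obtain ⟨ty, hty⟩ := hπ (y : k)
            have htyA : (ty : K) ∈ A := hmem ty.2 (by
              rw [show (⟨(ty : K), ty.2⟩ : T) = ty from rfl, hty]; exact y.2)
            have hty0 : π ty ≠ 0 := by rw [hty]; exact hy0
            obtain ⟨s, hs1, hs2⟩ := hinvT ty hty0
            have htyK0 : (ty : K) ≠ 0 := by
              intro h0
              exact hty0 (by rw [show ty = (0 : T) from Subtype.ext h0, map_zero])
            have hinvS : ((ty : K))⁻¹ ∈ S := by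
              rw [show ((ty : K))⁻¹ = (s : K) from
                ((eq_inv_of_mul_eq_one_right hs1).symm)]
              exact hTS _ s.2
            have hzT : (z : K) * (ty : K) ∈ T := T.mul_mem hz ty.2
            have hzD : π ⟨(z : K) * (ty : K), hzT⟩ ∈ D := by
              rw [show (⟨(z : K) * (ty : K), hzT⟩ : T) = ⟨(z : K), hz⟩ * ty from rfl,
                map_mul, hty, ← hxy,
                show ((y : k)) = algebraMap D k y from rfl, div_mul_cancel₀ _ ?_]
              · exact x.2
              · exact hy0
            refine ⟨⟨⟨_, hmem hzT hzD⟩, ⟨⟨(ty : K), htyA⟩, ⟨htyK0, hinvS⟩⟩⟩, ?_⟩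
            exact Subtype.ext rfl
          · obtain ⟨hz0, hzi, hπzi⟩ := hdich _ hz
            have hziA : (z : K)⁻¹ ∈ A := hMA ⟨(z : K)⁻¹, hzi⟩ hπzi
            refine ⟨⟨⟨1, A.one_mem⟩,
              ⟨⟨(z : K)⁻¹, hziA⟩, ⟨inv_ne_zero hz0, by rw [inv_inv]; exact z.2⟩⟩⟩, ?_⟩
            exact Subtype.ext (mul_inv_cancel₀ hz0)
        · intro x y hxy
          have hv := congrArg Subtype.val hxy
          have hxy' : x = y := Subtype.ext hv
          exact ⟨1, by rw [hxy']⟩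
  constructor
  · intro S h hGD
    obtain ⟨W, hW⟩ := key S h (Or.inl hGD)
    letI : Algebra ↥A ↥S := (Subring.inclusion h).toAlgebra
    haveI : IsLocalization W ↥S := hW
    exact IsLocalization.flat ↥S W
  · intro S h hfl
    exact key S h (Or.inr hfl)
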